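/- Let (Ω, 𝓑, ℙ, T) be an ergodic measure-preserving system with Ω = I^ℕ the full shift on a finite alphabet I and ℙ a T-invariant ergodic Borel probability measure. For each i ∈ I let p_i be a probability vector of length k_i with strictly positive entries. Define the measure ℙ̄ on Ω × {1,…,k_max}^ℕ by ∫f dℙ̄ = ∫_Ω ∫ f(ω,u) dη̄^{(ω)}(u) dℙ(ω), where η̄^{(ω)} = ∏_{n=1}^∞ p_{ω_n} is the product measure on ∏_n {1,…,k_{ω_n}}. Then ℙ̄ is invariant and ergodic for the left shift on the product space. -/

import Mathlib

open MeasureTheory Set Filter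
open scoped ENNReal

namespace SkewAux

/-- Cylinder sets in `ℕ → ℕ`. -/
def Cyl (n : ℕ) (u : ℕ → ℕ) : Set (ℕ → ℕ) := {x | ∀ i < n, x i = u i}

lemma measurableSet_cyl (n : ℕ) (u : ℕ → ℕ) : MeasurableSet (Cyl n u) := by
  have h : Cyl n u = ⋂ i ∈ Finset.range n, (fun x : ℕ → ℕ => x i) ⁻¹' {u i} := by
    ext x; simp [Cyl]
  rw [h]
  exact MeasurableSet.biInter (Finset.range n).countable_toSet fun i _ =>
    (measurable_pi_apply i) (measurableSet_singleton _)

def cylSet : Set (Set (ℕ → ℕ)) := {s | ∃ n u, s = Cyl n u}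

lemma isPiSystem_cyl : IsPiSystem cylSet := by
  rintro s ⟨n, u, rfl⟩ t ⟨m, v, rfl⟩ hne
  obtain ⟨x, hxs, hxt⟩ := hne
  rcases le_total n m with h | h
  · refine ⟨m, v, ?_⟩
    ext y
    constructor
    · rintro ⟨-, h2⟩; exact h2
    · intro hy
      refine ⟨fun i hi => ?_, hy⟩
      rw [hy i (hi.trans_le h), ← hxt i (hi.trans_le h), hxs i hi]
  · refine ⟨n, u, ?_⟩
    ext y
    constructor
    · rintro ⟨h1, -⟩; exact h1
    · intro hy
      refine ⟨hy, fun i hi => ?_⟩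
      rw [hy i (hi.trans_le h), ← hxs i (hi.trans_le h), hxt i hi]

lemma generateFrom_cyl :
    MeasurableSpace.generateFrom cylSet = (inferInstance : MeasurableSpace (ℕ → ℕ)) := by
  apply le_antisymm
  · rw [MeasurableSpace.generateFrom_le_iff]
    rintro s ⟨n, u, rfl⟩; exact measurableSet_cyl n u
  · refine iSup_le fun i => ?_
    rintro s ⟨t, -, rfl⟩
    have h1 : ∀ j : ℕ, MeasurableSet[MeasurableSpace.generateFrom cylSet]
        {x : ℕ → ℕ | x i = j} := by
      intro j
      have he : {x : ℕ → ℕ | x i = j}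
          = ⋃ v : Fin i → ℕ, Cyl (i + 1) (fun m => if h : m < i then v ⟨m, h⟩ else j) := by
        ext x
        simp only [mem_setOf_eq, mem_iUnion]
        constructor
        · intro hx
          refine ⟨fun m => x m.1, fun m hm => ?_⟩
          rcases lt_or_ge m i with h | h
          · simp [h]
          · have : m = i := by omega
            simp [this, hx]
        · rintro ⟨v, hv⟩
          have := hv i (by omega)
          simpa using this
      rw [he]
      exact MeasurableSet.iUnion fun v => MeasurableSpace.measurableSet_generateFrom ⟨_, _, rfl⟩
    have he : (fun x : ℕ → ℕ => x i) ⁻¹' t = ⋃ j ∈ t, {x : ℕ → ℕ | x i = j} := by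
      ext x; simp
    rw [he]
    exact MeasurableSet.biUnion t.to_countable fun j _ => h1 j

lemma measure_ext_cyl (μ ν : Measure (ℕ → ℕ)) [IsFiniteMeasure μ]
    (h : ∀ n u, μ (Cyl n u) = ν (Cyl n u)) (huniv : μ univ = ν univ) : μ = ν :=
  ext_of_generate_finite cylSet generateFrom_cyl.symm isPiSystem_cyl
    (by rintro s ⟨n, u, rfl⟩; exact h n u) huniv

lemma iterate_shift {α : Type*} (n : ℕ) (x : ℕ → α) (m : ℕ) :
    (fun (y : ℕ → α) k => y (k + 1))^[n] x m = x (m + n) := by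
  induction n generalizing x m with
  | zero => simp
  | succ n ih =>
    rw [Function.iterate_succ_apply, ih]
    congr 1

lemma measurable_shift {α : Type*} [MeasurableSpace α] :
    Measurable (fun (y : ℕ → α) k => y (k + 1)) :=
  measurable_pi_lambda _ fun n => measurable_pi_apply (n + 1)

end SkewAux

namespace SkewAux

variable {I : Type*} [MeasurableSpace I]

lemma eta_shift (p : I → ℕ → ℝ≥0∞) (hp_sum : ∀ i, ∑' j : ℕ, p i j = 1)
    (η : (ℕ → I) → Measure (ℕ → ℕ)) (hηprob : ∀ ω, IsProbabilityMeasure (η ω))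
    (hηcyl : ∀ (ω : ℕ → I) (n : ℕ) (u : ℕ → ℕ),
      η ω (Cyl n u) = ∏ i ∈ Finset.range n, p (ω i) (u i))
    (ω : ℕ → I) {B : Set (ℕ → ℕ)} (hB : MeasurableSet B) :
    η ω ((fun (x : ℕ → ℕ) k => x (k + 1)) ⁻¹' B) = η (fun k => ω (k + 1)) B := by
  haveI := hηprob ω
  have hmap : (η ω).map (fun (x : ℕ → ℕ) k => x (k + 1)) = η (fun k => ω (k + 1)) := by
    refine measure_ext_cyl _ _ (fun n u => ?_) ?_
    · rw [Measure.map_apply measurable_shift (measurableSet_cyl n u)]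
      have hset : (fun (x : ℕ → ℕ) k => x (k + 1)) ⁻¹' Cyl n u
          = ⋃ j : ℕ, Cyl (n + 1) (fun m => if m = 0 then j else u (m - 1)) := by
        ext x
        simp only [mem_preimage, Cyl, mem_setOf_eq, mem_iUnion]
        constructor
        · intro hx
          refine ⟨x 0, fun m hm => ?_⟩
          cases m with
          | zero => simp
          | succ i =>
            simp only [Nat.succ_ne_zero, if_false]
            have hi : i < n := by omega
            simpa using hx i hi
        · rintro ⟨j, hj⟩ i hi
          have := hj (i + 1) (by omega)
          simpa using this
      have hdisj : Pairwise (Function.onFun Disjoint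
          fun j : ℕ => Cyl (n + 1) (fun m => if m = 0 then j else u (m - 1))) := by
        intro j j' hne
        rw [Function.onFun, Set.disjoint_left]
        intro x hx hx'
        have h1 := hx 0 (by omega)
        have h2 := hx' 0 (by omega)
        simp at h1 h2
        omega
      rw [hset, measure_iUnion hdisj (fun j => measurableSet_cyl _ _)]
      have hterm : ∀ j : ℕ,
          η ω (Cyl (n + 1) (fun m => if m = 0 then j else u (m - 1)))
            = (∏ i ∈ Finset.range n, p (ω (i + 1)) (u i)) * p (ω 0) j := by
        intro j
        rw [hηcyl, Finset.prod_range_succ']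
        simp
      rw [tsum_congr hterm, ENNReal.tsum_mul_left, hp_sum, mul_one, hηcyl]
    · rw [Measure.map_apply measurable_shift MeasurableSet.univ]
      haveI := hηprob (fun k => ω (k + 1))
      simp [measure_univ]
  rw [← hmap, Measure.map_apply measurable_shift hB]

lemma eta_shift_iter (p : I → ℕ → ℝ≥0∞) (hp_sum : ∀ i, ∑' j : ℕ, p i j = 1)
    (η : (ℕ → I) → Measure (ℕ → ℕ)) (hηprob : ∀ ω, IsProbabilityMeasure (η ω))
    (hηcyl : ∀ (ω : ℕ → I) (n : ℕ) (u : ℕ → ℕ),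
      η ω (Cyl n u) = ∏ i ∈ Finset.range n, p (ω i) (u i))
    (n : ℕ) (ω : ℕ → I) {B : Set (ℕ → ℕ)} (hB : MeasurableSet B) :
    η ω ((fun (x : ℕ → ℕ) k => x (k + 1))^[n] ⁻¹' B)
      = η ((fun (ω' : ℕ → I) k => ω' (k + 1))^[n] ω) B := by
  induction n generalizing ω with
  | zero => simp
  | succ n ih =>
    rw [Function.iterate_succ, Set.preimage_comp,
      eta_shift p hp_sum η hηprob hηcyl ω ((measurable_shift.iterate n) hB),
      ih, Function.iterate_succ_apply]

end SkewAux

namespace SkewAux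

set_option linter.unusedSectionVars false in
lemma eta_indep {I : Type*} [MeasurableSpace I]
    (p : I → ℕ → ℝ≥0∞) (hp_sum : ∀ i, ∑' j : ℕ, p i j = 1)
    (η : (ℕ → I) → Measure (ℕ → ℕ)) (hηprob : ∀ ω, IsProbabilityMeasure (η ω))
    (hηcyl : ∀ (ω : ℕ → I) (n : ℕ) (u : ℕ → ℕ),
      η ω (Cyl n u) = ∏ i ∈ Finset.range n, p (ω i) (u i))
    (ω : ℕ → I) (n : ℕ) (u : ℕ → ℕ) {B : Set (ℕ → ℕ)} (hB : MeasurableSet B) :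
    η ω (Cyl n u ∩ (fun (x : ℕ → ℕ) k => x (k + 1))^[n] ⁻¹' B)
      = η ω (Cyl n u) * η ((fun (ω' : ℕ → I) k => ω' (k + 1))^[n] ω) B := by
  haveI := hηprob ω
  set σn : (ℕ → ℕ) → (ℕ → ℕ) := (fun (x : ℕ → ℕ) k => x (k + 1))^[n] with hσn
  have hσnm : Measurable σn := measurable_shift.iterate n
  set Sn : (ℕ → I) → (ℕ → I) := (fun (ω' : ℕ → I) k => ω' (k + 1))^[n] with hSn
  set μ₁ : Measure (ℕ → ℕ) := ((η ω).restrict (Cyl n u)).map σn with hμ₁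
  set μ₂ : Measure (ℕ → ℕ) := η ω (Cyl n u) • η (Sn ω) with hμ₂
  haveI : IsFiniteMeasure μ₁ := Measure.isFiniteMeasure_map _ _
  have key : μ₁ = μ₂ := by
    refine measure_ext_cyl _ _ (fun m v => ?_) ?_
    · rw [hμ₁, Measure.map_apply hσnm (measurableSet_cyl m v),
        Measure.restrict_apply (hσnm (measurableSet_cyl m v))]
      have hset : σn ⁻¹' Cyl m v ∩ Cyl n u
          = Cyl (n + m) (fun i => if i < n then u i else v (i - n)) := by
        ext x
        simp only [mem_inter_iff, mem_preimage, Cyl, mem_setOf_eq, hσn, iterate_shift]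
        constructor
        · rintro ⟨h1, h2⟩ i hi
          by_cases h : i < n
          · rw [if_pos h]; exact h2 i h
          · rw [if_neg h]
            have hin : i - n < m := by omega
            have := h1 (i - n) hin
            rw [← this]; congr 1; omega
        · intro h
          constructor
          · intro j hj
            have := h (j + n) (by omega)
            rw [if_neg (by omega)] at this
            simpa using this
          · intro i hi
            have := h i (by omega)
            rwa [if_pos hi] at this
      rw [hset, hηcyl, Finset.prod_range_add]
      have h1 : ∏ i ∈ Finset.range n, p (ω i) (if i < n then u i else v (i - n))
          = η ω (Cyl n u) := by
        rw [hηcyl]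
        exact Finset.prod_congr rfl fun i hi => by
          rw [if_pos (Finset.mem_range.mp hi)]
      have h2 : ∏ j ∈ Finset.range m, p (ω (n + j)) (if n + j < n then u (n + j) else v (n + j - n))
          = η (Sn ω) (Cyl m v) := by
        rw [hηcyl]
        refine Finset.prod_congr rfl fun j _ => ?_
        rw [if_neg (by omega)]
        have ha : n + j - n = j := by omega
        have hb : Sn ω j = ω (n + j) := by rw [hSn, iterate_shift]; congr 1; omega
        rw [ha, hb]
      rw [h1, h2, hμ₂, Measure.smul_apply, smul_eq_mul]
    · haveI := hηprob (Sn ω)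
      rw [hμ₁, Measure.map_apply hσnm MeasurableSet.univ, Set.preimage_univ,
        Measure.restrict_apply MeasurableSet.univ, Set.univ_inter, hμ₂,
        Measure.smul_apply, smul_eq_mul, measure_univ, mul_one]
  have h3 : η ω (Cyl n u ∩ σn ⁻¹' B) = μ₁ B := by
    rw [hμ₁, Measure.map_apply hσnm hB, Measure.restrict_apply (hσnm hB), Set.inter_comm]
  rw [h3, key, hμ₂, Measure.smul_apply, smul_eq_mul]

end SkewAux

open MeasureTheory
open scoped ENNReal

/-- If `ℙ` is a shift-invariant ergodic measure on `Ω = I^ℕ` and `ℙ̄` is the skew-product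
measure on `Ω × ℕ^ℕ` obtained by choosing, given `ω`, the digits independently with the
probability vectors `p_{ω_n}` (encoded through the cylinder condition `hηcyl`), then `ℙ̄`
is invariant and ergodic for the left shift on the product space. -/
theorem skew_product_ergodic {I : Type*} [Fintype I] [MeasurableSpace I]
    [MeasurableSingletonClass I]
    (k : I → ℕ) (hk : ∀ i, 1 ≤ k i)
    (p : I → ℕ → ℝ≥0∞)
    (hp_pos : ∀ i j, j < k i → 0 < p i j)
    (hp_zero : ∀ i j, k i ≤ j → p i j = 0)
    (hp_sum : ∀ i, ∑' j : ℕ, p i j = 1)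
    (P : Measure (ℕ → I)) [IsProbabilityMeasure P]
    (herg : Ergodic (fun ω (n : ℕ) => ω (n + 1)) P)
    (η : (ℕ → I) → Measure (ℕ → ℕ))
    (hηprob : ∀ ω, IsProbabilityMeasure (η ω))
    (hηmeas : Measurable η)
    (hηcyl : ∀ (ω : ℕ → I) (n : ℕ) (u : ℕ → ℕ),
      η ω {x | ∀ i < n, x i = u i} = ∏ i ∈ Finset.range n, p (ω i) (u i)) :
    MeasurePreserving
        (fun z : (ℕ → I) × (ℕ → ℕ) => (fun n => z.1 (n + 1), fun n => z.2 (n + 1)))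
        (P.bind fun ω => (η ω).map (fun u => (ω, u)))
        (P.bind fun ω => (η ω).map (fun u => (ω, u)))
      ∧ Ergodic
        (fun z : (ℕ → I) × (ℕ → ℕ) => (fun n => z.1 (n + 1), fun n => z.2 (n + 1)))
        (P.bind fun ω => (η ω).map (fun u => (ω, u))) := by
  classical
  have hηcyl' : ∀ (ω : ℕ → I) (n : ℕ) (u : ℕ → ℕ),
      η ω (SkewAux.Cyl n u) = ∏ i ∈ Finset.range n, p (ω i) (u i) := hηcyl
  set S : (ℕ → I) → (ℕ → I) := fun ω n => ω (n + 1) with hS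
  set σ : (ℕ → ℕ) → (ℕ → ℕ) := fun x n => x (n + 1) with hσ
  set F : (ℕ → I) × (ℕ → ℕ) → (ℕ → I) × (ℕ → ℕ) :=
    (fun z : (ℕ → I) × (ℕ → ℕ) => (fun n => z.1 (n + 1), fun n => z.2 (n + 1))) with hF
  set μb : Measure ((ℕ → I) × (ℕ → ℕ)) :=
    P.bind fun ω => (η ω).map (fun u => (ω, u)) with hμb
  have hFm : Measurable F :=
    (SkewAux.measurable_shift.comp measurable_fst).prodMk
      (SkewAux.measurable_shift.comp measurable_snd)
  -- kernel
  let κ : ProbabilityTheory.Kernel (ℕ → I) (ℕ → ℕ) := ⟨η, hηmeas⟩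
  haveI : ProbabilityTheory.IsMarkovKernel κ := ⟨hηprob⟩
  have hgmeas : ∀ {A : Set ((ℕ → I) × (ℕ → ℕ))}, MeasurableSet A →
      Measurable (fun ω => η ω (Prod.mk ω ⁻¹' A)) := fun hA =>
    ProbabilityTheory.Kernel.measurable_kernel_prodMk_left (κ := κ) hA
  have hmeasmap : Measurable (fun ω => (η ω).map (fun u => (ω, u))) := by
    apply Measure.measurable_of_measurable_coe
    intro s hs
    simp only [Measure.map_apply measurable_prodMk_left hs]
    exact hgmeas hs
  have hbind : ∀ {A : Set ((ℕ → I) × (ℕ → ℕ))}, MeasurableSet A →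
      μb A = ∫⁻ ω, η ω (Prod.mk ω ⁻¹' A) ∂P := by
    intro A hA
    rw [hμb, Measure.bind_apply hA hmeasmap.aemeasurable]
    exact lintegral_congr fun ω => Measure.map_apply measurable_prodMk_left hA
  haveI hμbprob : IsProbabilityMeasure μb := by
    constructor
    rw [hbind MeasurableSet.univ]
    simp only [Set.preimage_univ]
    rw [lintegral_congr fun ω => (hηprob ω).measure_univ, lintegral_one, measure_univ]
  have hshift : ∀ (ω : ℕ → I) {B : Set (ℕ → ℕ)}, MeasurableSet B →
      η ω (σ ⁻¹' B) = η (S ω) B := fun ω {B} hB =>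
    SkewAux.eta_shift p hp_sum η hηprob hηcyl' ω hB
  -- measure preserving
  have hmp : MeasurePreserving F μb μb := by
    refine ⟨hFm, ?_⟩
    ext A hA
    rw [Measure.map_apply hFm hA, hbind (hFm hA), hbind hA]
    have hpt : ∀ ω, η ω (Prod.mk ω ⁻¹' (F ⁻¹' A)) = η (S ω) (Prod.mk (S ω) ⁻¹' A) := by
      intro ω
      have hset : Prod.mk ω ⁻¹' (F ⁻¹' A) = σ ⁻¹' (Prod.mk (S ω) ⁻¹' A) := rfl
      rw [hset]
      exact hshift ω (measurable_prodMk_left hA)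
    rw [lintegral_congr hpt]
    exact herg.toMeasurePreserving.lintegral_comp (hgmeas hA)
  refine ⟨hmp, hmp, ⟨fun A hA hinv => ?_⟩⟩
  -- ergodicity
  set g : (ℕ → I) → ℝ≥0∞ := fun ω => η ω (Prod.mk ω ⁻¹' A) with hg
  have hginv : ∀ ω, g ω = g (S ω) := by
    intro ω
    have h1 : Prod.mk ω ⁻¹' A = σ ⁻¹' (Prod.mk (S ω) ⁻¹' A) := by
      conv_lhs => rw [← hinv]
      rfl
    show η ω (Prod.mk ω ⁻¹' A) = η (S ω) (Prod.mk (S ω) ⁻¹' A)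
    rw [h1]
    exact hshift ω (measurable_prodMk_left hA)
  have hsect : ∀ (n : ℕ) (ω : ℕ → I),
      Prod.mk ω ⁻¹' A = (σ^[n]) ⁻¹' (Prod.mk (S^[n] ω) ⁻¹' A) := by
    intro n
    induction n with
    | zero => intro ω; simp
    | succ n ih =>
      intro ω
      have h1 : Prod.mk ω ⁻¹' A = σ ⁻¹' (Prod.mk (S ω) ⁻¹' A) := by
        conv_lhs => rw [← hinv]
        rfl
      rw [h1, ih (S ω), ← Set.preimage_comp, ← Function.iterate_succ,
        ← Function.iterate_succ_apply]
  have hgiter : ∀ (n : ℕ) (ω : ℕ → I), g (S^[n] ω) = g ω := by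
    intro n
    induction n with
    | zero => intro ω; rfl
    | succ n ih =>
      intro ω
      rw [Function.iterate_succ_apply, ih (S ω), ← hginv ω]
  have hval : ∀ ω, g ω * g ω = g ω := by
    intro ω
    haveI := hηprob ω
    have hEm : MeasurableSet (Prod.mk ω ⁻¹' A) := measurable_prodMk_left hA
    have key : (η ω).restrict (Prod.mk ω ⁻¹' A) = g ω • η ω := by
      refine SkewAux.measure_ext_cyl _ _ (fun n u => ?_) ?_
      · rw [Measure.restrict_apply (SkewAux.measurableSet_cyl n u)]
        calc η ω (SkewAux.Cyl n u ∩ Prod.mk ω ⁻¹' A)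
            = η ω (SkewAux.Cyl n u ∩ (σ^[n]) ⁻¹' (Prod.mk (S^[n] ω) ⁻¹' A)) := by
              rw [← hsect n ω]
          _ = η ω (SkewAux.Cyl n u) * η (S^[n] ω) (Prod.mk (S^[n] ω) ⁻¹' A) :=
              SkewAux.eta_indep p hp_sum η hηprob hηcyl' ω n u
                (measurable_prodMk_left hA)
          _ = η ω (SkewAux.Cyl n u) * g ω := by rw [show η (S^[n] ω) (Prod.mk (S^[n] ω) ⁻¹' A) = g (S^[n] ω) from rfl, hgiter n ω]
          _ = (g ω • η ω) (SkewAux.Cyl n u) := by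
              rw [Measure.smul_apply, smul_eq_mul, mul_comm]
      · rw [Measure.restrict_apply MeasurableSet.univ, Set.univ_inter,
          Measure.smul_apply, smul_eq_mul, measure_univ, mul_one]
    have h2 := congrArg (fun μ' : Measure (ℕ → ℕ) => μ' (Prod.mk ω ⁻¹' A)) key
    simp only [Measure.restrict_apply hEm, Set.inter_self, Measure.smul_apply,
      smul_eq_mul] at h2
    exact h2.symm
  have h01 : ∀ ω, g ω = 0 ∨ g ω = 1 := by
    intro ω
    haveI := hηprob ω
    have hle : g ω ≤ 1 := prob_le_one
    rcases eq_or_ne (g ω) 0 with h | h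
    · exact Or.inl h
    · refine Or.inr ?_
      have htop : g ω ≠ ∞ := ne_top_of_le_ne_top ENNReal.one_ne_top hle
      have h3 : g ω * g ω = g ω * 1 := by rw [mul_one]; exact hval ω
      exact (ENNReal.mul_right_inj h htop).mp h3
  have hGm : MeasurableSet (g ⁻¹' {1}) := (hgmeas hA) (measurableSet_singleton 1)
  have hGinv : S ⁻¹' (g ⁻¹' {1}) = g ⁻¹' {1} := by
    ext ω
    simp only [Set.mem_preimage, Set.mem_singleton_iff]
    rw [← hginv ω]
  have hμA : μb A = P (g ⁻¹' {1}) := by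
    rw [hbind hA]
    have hpt : ∀ ω, η ω (Prod.mk ω ⁻¹' A) = (g ⁻¹' {1}).indicator (1 : (ℕ → I) → ℝ≥0∞) ω := by
      intro ω
      by_cases hmem : ω ∈ g ⁻¹' {1}
      · have h1 : g ω = 1 := hmem
        rw [show η ω (Prod.mk ω ⁻¹' A) = g ω from rfl, h1, Set.indicator_of_mem hmem]
        rfl
      · have h0 : g ω = 0 := (h01 ω).resolve_right (by simpa using hmem)
        rw [show η ω (Prod.mk ω ⁻¹' A) = g ω from rfl, h0, Set.indicator_of_notMem hmem]
    rw [lintegral_congr hpt, lintegral_indicator_one hGm]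
  rcases herg.toPreErgodic.ae_empty_or_univ hGm hGinv with h | h
  · refine Filter.eventuallyConst_set'.mpr (Or.inl ?_)
    rw [ae_eq_empty] at h ⊢
    rw [hμA, h]
  · refine Filter.eventuallyConst_set'.mpr (Or.inr ?_)
    rw [ae_eq_univ]
    have hP1 : P (g ⁻¹' {1}) = 1 := by
      have := measure_congr h
      rwa [measure_univ] at this
    rw [prob_compl_eq_zero_iff hA, hμA, hP1]
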